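/- Let G be a group, G♯ := (G × G) ⋊ {1, τ} where τ is the flip automorphism τ(g,h) = (h,g), and let D := {(g, g⁻¹) : g ∈ G} ⊆ G × G. Then the subgroup of G × G generated by D equals (G' × {e}) · D, where G' is the commutator subgroup of G. -/

import Mathlib

/-- The subgroup of `G × G` generated by `D = {(g, g⁻¹) : g ∈ G}` equals
`(G' × {e}) · D`, where `G'` is the commutator subgroup of `G`. -/
theorem stmt1 {G : Type*} [Group G] :
    (↑(Subgroup.closure {p : G × G | ∃ g : G, p = (g, g⁻¹)}) : Set (G × G))
      = {p : G × G | ∃ c ∈ commutator G, ∃ g : G, p = (c * g, g⁻¹)} := by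
  set D : Set (G × G) := {p : G × G | ∃ g : G, p = (g, g⁻¹)} with hD
  set H := Subgroup.closure D with hH
  have hd : ∀ g : G, (g, g⁻¹) ∈ H := fun g => Subgroup.subset_closure ⟨g, rfl⟩
  -- (c, 1) ∈ H for c in the commutator subgroup
  have hc1 : ∀ c ∈ commutator G, ((c, (1 : G)) : G × G) ∈ H := by
    intro c hc
    have : commutator G ≤ Subgroup.comap (MonoidHom.prod (MonoidHom.id G) 1) H := by
      rw [commutator_eq_closure, Subgroup.closure_le]
      rintro x ⟨p, q, rfl⟩
      open scoped commutatorElement in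
      have key : ((⁅p, q⁆, (1 : G)) : G × G)
          = ((p⁻¹, p⁻¹⁻¹) : G × G)⁻¹ * ((q⁻¹, q⁻¹⁻¹) : G × G)⁻¹
            * ((p⁻¹ * q⁻¹, (p⁻¹ * q⁻¹)⁻¹) : G × G) := by
        simp [Prod.ext_iff, commutatorElement_def, mul_assoc]
      open scoped commutatorElement in
      show ((⁅p, q⁆, (1 : G)) : G × G) ∈ H
      rw [key]
      exact mul_mem (mul_mem (inv_mem (hd _)) (inv_mem (hd _))) (hd _)
    exact this hc
  ext p
  constructor
  · intro hp
    -- use the homomorphism (a,b) ↦ of a * of b into the abelianization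
    have hker : ∀ q ∈ H,
        Abelianization.of q.1 * Abelianization.of q.2 = 1 := by
      intro q hq
      have : H ≤ MonoidHom.ker
          ((Abelianization.of.comp (MonoidHom.fst G G))
            * (Abelianization.of.comp (MonoidHom.snd G G))) := by
        rw [hH, Subgroup.closure_le]
        rintro x ⟨g, rfl⟩
        simp [MonoidHom.mem_ker]
      simpa [MonoidHom.mem_ker] using this hq
    have h1 : Abelianization.of p.1 * Abelianization.of p.2 = 1 := hker p hp
    have h2 : p.1 * p.2 ∈ commutator G := by
      have : Abelianization.of (p.1 * p.2) = 1 := by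
        rw [map_mul]; exact h1
      exact (QuotientGroup.eq_one_iff _).mp this
    exact ⟨p.1 * p.2, h2, p.2⁻¹, by simp [Prod.ext_iff, mul_assoc]⟩
  · rintro ⟨c, hc, g, rfl⟩
    have : ((c * g, g⁻¹) : G × G) = ((c, 1) : G × G) * ((g, g⁻¹) : G × G) := by
      simp [Prod.ext_iff]
    rw [this]
    exact mul_mem (hc1 c hc) (hd g)
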